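/- Let (m_k) be the Marmi–Moussa–Yoccoz acceleration times of the Rauzy–Veech induction of an interval exchange map T on d ≥ 2 intervals (m_{k+1} is the largest integer > m_k such that not all letters of the alphabet appear as winner in the Rauzy path from m_k to m_{k+1}). Then for r ≥ max(2d − 3, 2), all entries of the cocycle matrix A(k, k+r) = Q(m_k, m_{k+r}) are strictly positive. -/

import Mathlib

/-! Rauzy–Veech induction for interval exchange maps: combinatorial data,
length data, the elementary Rauzy step, cocycle matrices, and acceleration times. -/

/-- Combinatorial data of an interval exchange map: two bijections ("top" and
"bottom") from the alphabet onto positions (0-indexed; position `card A - 1`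
is the last one). -/
structure IETComb (A : Type) [Fintype A] where
  pt : A ≃ Fin (Fintype.card A)
  pb : A ≃ Fin (Fintype.card A)

/-- Full data of an interval exchange map: combinatorial data plus length data. -/
structure IETData (A : Type) [Fintype A] extends IETComb A where
  lam : A → ℝ

variable {A : Type} [Fintype A] [DecidableEq A] [Nonempty A]

/-- The last position. -/
def lastIdx (A : Type) [Fintype A] [Nonempty A] : Fin (Fintype.card A) :=
  ⟨Fintype.card A - 1, Nat.sub_lt Fintype.card_pos Nat.one_pos⟩

/-- The letter in the last position of the top row. -/
def topLetter (c : IETComb A) : A := c.pt.symm (lastIdx A)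

/-- The letter in the last position of the bottom row. -/
def botLetter (c : IETComb A) : A := c.pb.symm (lastIdx A)

/-- The combinatorial Rauzy operation of top type `R_t`: the top row is unchanged and
the bottom row is rearranged so that the bottom-last letter is moved to just after the
position of the top-last letter. -/
def TopComb (c c' : IETComb A) : Prop :=
  c'.pt = c.pt ∧
  ∀ β : A, (c'.pb β : ℕ) =
    if (c.pb β : ℕ) ≤ (c.pb (topLetter c) : ℕ) then (c.pb β : ℕ)
    else if β = botLetter c then (c.pb (topLetter c) : ℕ) + 1
    else (c.pb β : ℕ) + 1

/-- The combinatorial Rauzy operation of bottom type `R_b`. -/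
def BotComb (c c' : IETComb A) : Prop :=
  c'.pb = c.pb ∧
  ∀ β : A, (c'.pt β : ℕ) =
    if (c.pt β : ℕ) ≤ (c.pt (botLetter c) : ℕ) then (c.pt β : ℕ)
    else if β = topLetter c then (c.pt (botLetter c) : ℕ) + 1
    else (c.pt β : ℕ) + 1

/-- One step of Rauzy–Veech induction, recording the winner and the loser. -/
def RVStep (D D' : IETData A) (win lose : A) : Prop :=
  (win = topLetter D.toIETComb ∧ lose = botLetter D.toIETComb ∧
    D.lam lose < D.lam win ∧ TopComb D.toIETComb D'.toIETComb ∧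
    D'.lam = Function.update D.lam win (D.lam win - D.lam lose)) ∨
  (win = botLetter D.toIETComb ∧ lose = topLetter D.toIETComb ∧
    D.lam lose < D.lam win ∧ BotComb D.toIETComb D'.toIETComb ∧
    D'.lam = Function.update D.lam win (D.lam win - D.lam lose))

/-- The elementary Rauzy matrix `B_γ = I + E_{loser, winner}` of the i-th arrow. -/
def Bmat (win lose : ℕ → A) (i : ℕ) : Matrix A A ℕ :=
  1 + Matrix.single (lose i) (win i) 1

/-- The cocycle matrix `Q(m,n) = B_{γ_{n-1}} ⋯ B_{γ_m}` along the Rauzy path. -/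
def Qmat (win lose : ℕ → A) (m n : ℕ) : Matrix A A ℕ :=
  (((List.range' m (n - m)).map (Bmat win lose)).reverse).prod

/-- The norm of a matrix: the sum of the absolute values of its entries. -/
noncomputable def matNorm (Q : Matrix A A ℕ) : ℝ := ∑ a, ∑ b, (Q a b : ℝ)

/-- `nk` is the sequence of Zorich acceleration times of the Rauzy path with winners
`win`: `n_0 = 0` and `γ(n_k, n_{k+1})` is the longest path all of whose arrows have the
same winner. -/
def ZorichTimes (win : ℕ → A) (nk : ℕ → ℕ) : Prop :=
  nk 0 = 0 ∧ StrictMono nk ∧ ∀ k : ℕ,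
    (∀ i : ℕ, nk k ≤ i → i < nk (k + 1) → win i = win (nk k)) ∧
    win (nk (k + 1)) ≠ win (nk k)

/-- `mk` is the sequence of Marmi–Moussa–Yoccoz acceleration times: `m_0 = 0` and
`m_{k+1} > m_k` is the largest integer such that not all letters are taken as winner
by the arrows in `γ(m_k, m_{k+1})`. -/
def MMYTimes (win : ℕ → A) (mk : ℕ → ℕ) : Prop :=
  mk 0 = 0 ∧ StrictMono mk ∧ ∀ k : ℕ,
    (Finset.Ico (mk k) (mk (k + 1))).image win ≠ Finset.univ ∧
    (Finset.Icc (mk k) (mk (k + 1))).image win = Finset.univ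

section aux
variable {A : Type} [Fintype A] [DecidableEq A]

lemma Qmat_of_le (win lose : ℕ → A) {m n : ℕ} (h : n ≤ m) : Qmat win lose m n = 1 := by
  simp [Qmat, Nat.sub_eq_zero_of_le h]

lemma Qmat_succ (win lose : ℕ → A) {m n : ℕ} (h : m ≤ n) :
    Qmat win lose m (n + 1) = Bmat win lose n * Qmat win lose m n := by
  have h1 : n + 1 - m = (n - m) + 1 := by omega
  have h2 : m + 1 * (n - m) = n := by omega
  rw [Qmat, Qmat, h1, List.range'_concat, h2]
  simp

lemma Qmat_succ_apply (win lose : ℕ → A) {m n : ℕ} (h : m ≤ n) (c d : A) :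
    Qmat win lose m (n + 1) c d = Qmat win lose m n c d +
      if c = lose n then Qmat win lose m n (win n) d else 0 := by
  rw [Qmat_succ win lose h, Bmat, Matrix.add_mul, Matrix.one_mul, Matrix.add_apply]
  congr 1
  by_cases hc : c = lose n
  · subst hc; simp
  · rw [if_neg hc]; exact Matrix.single_mul_apply_of_ne _ _ _ _ _ hc _

lemma pos_succ_iff (win lose : ℕ → A) (M : ℕ) (b : A) {n : ℕ} (h : M ≤ n) (c : A) :
    0 < Qmat win lose M (n + 1) c b ↔
      0 < Qmat win lose M n c b ∨ (c = lose n ∧ 0 < Qmat win lose M n (win n) b) := by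
  rw [Qmat_succ_apply win lose h]
  by_cases hc : c = lose n <;> simp [hc]

lemma pos_M_iff (win lose : ℕ → A) (M : ℕ) (b c : A) :
    (0 < Qmat win lose M M c b ↔ c = b) := by
  rw [Qmat_of_le win lose le_rfl, Matrix.one_apply]
  by_cases h : c = b <;> simp [h]

lemma pos_mono (win lose : ℕ → A) (M : ℕ) (b : A) {s u : ℕ} (hMs : M ≤ s) (hsu : s ≤ u)
    {c : A} (h : 0 < Qmat win lose M s c b) : 0 < Qmat win lose M u c b := by
  induction u, hsu using Nat.le_induction with
  | base => exact h
  | succ u hu ih => exact (pos_succ_iff win lose M b (hMs.trans hu) c).2 (Or.inl ih)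

lemma pos_b (win lose : ℕ → A) (M : ℕ) (b : A) {s : ℕ} (hMs : M ≤ s) :
    0 < Qmat win lose M s b b :=
  pos_mono win lose M b le_rfl hMs ((pos_M_iff win lose M b b).2 rfl)

end aux

section aux2
variable {A : Type} [Fintype A] [DecidableEq A]

/-- No-growth propagation / growth extraction. -/
lemma claimD (win lose : ℕ → A)
    (hwl : ∀ n, win n ≠ lose n)
    (hF : ∀ n, win n = win (n + 1) ∨ win n = lose (n + 1))
    (M : ℕ) (b : A) {t u : ℕ} (hMt : M ≤ t) (htu : t ≤ u)
    (ht : ¬ 0 < Qmat win lose M t (win t) b)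
    (hu : 0 < Qmat win lose M u (win u) b) :
    ∃ s, t < s ∧ s ≤ u ∧ 0 < Qmat win lose M s (win s) b ∧
      ¬ 0 < Qmat win lose M s (lose s) b := by
  by_contra hng
  push_neg at hng
  have key : ∀ v, t ≤ v →
      (∀ s, t < s → s ≤ v → 0 < Qmat win lose M s (win s) b →
        0 < Qmat win lose M s (lose s) b) →
      ¬ 0 < Qmat win lose M v (win v) b := by
    intro v hv
    induction v, hv using Nat.le_induction with
    | base => intro _; exact ht
    | succ v hv ih =>
      intro hng2
      have h0 := ih (fun s h1 h2 => hng2 s h1 (Nat.le_succ_of_le h2))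
      intro hpos
      have hstep := fun c => pos_succ_iff win lose M b (hMt.trans hv) c
      rcases hF v with h | h
      · rw [← h, hstep] at hpos
        rcases hpos with h1 | ⟨h2, h3⟩
        · exact h0 h1
        · exact hwl v h2
      · have hl : ¬ 0 < Qmat win lose M (v + 1) (lose (v + 1)) b := by
          rw [← h, hstep]
          rintro (h1 | ⟨h2, h3⟩)
          · exact h0 h1
          · exact h0 h3
        exact hl (hng2 (v + 1) (Nat.lt_succ_of_le hv) le_rfl hpos)
  exact key u htu hng hu

/-- In the first segment a growth always occurs, since initially only `b` is positive. -/
lemma firstGrowth (win lose : ℕ → A)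
    (hwl : ∀ n, win n ≠ lose n)
    (M : ℕ) (b : A) {u : ℕ} (hMu : M ≤ u) (hub : win u = b) :
    ∃ s, M ≤ s ∧ s ≤ u ∧ 0 < Qmat win lose M s (win s) b ∧
      ¬ 0 < Qmat win lose M s (lose s) b := by
  by_contra hng
  push_neg at hng
  have inv : ∀ v, M ≤ v → v ≤ u → ∀ c, (0 < Qmat win lose M v c b ↔ c = b) := by
    intro v hv
    induction v, hv using Nat.le_induction with
    | base => intro _ c; exact pos_M_iff win lose M b c
    | succ v hv ih =>
      intro hvu c
      have ihc := ih (Nat.le_of_succ_le hvu)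
      rw [pos_succ_iff win lose M b hv c]
      constructor
      · rintro (h1 | ⟨h2, h3⟩)
        · exact (ihc _).1 h1
        · have hwb : win v = b := (ihc _).1 h3
          have hlb : lose v = b :=
            (ihc _).1 (hng v hv (Nat.le_of_succ_le hvu) h3)
          exact absurd (hwb.trans hlb.symm) (hwl v)
      · intro hcb
        exact Or.inl ((ihc c).2 hcb)
  have h1 : 0 < Qmat win lose M u (win u) b := (inv u hMu le_rfl _).2 hub
  have h2 : lose u = b := (inv u hMu le_rfl _).1 (hng u hMu le_rfl h1)
  exact hwl u (hub.trans h2.symm)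

end aux2

section aux3
variable {A : Type} [Fintype A] [DecidableEq A]

/-- The set of letters whose `Qmat`-column entry at `b` is positive at time `t`. -/
def posSet (win lose : ℕ → A) (M : ℕ) (b : A) (t : ℕ) : Finset A :=
  Finset.univ.filter fun c => 0 < Qmat win lose M t c b

lemma mem_posSet (win lose : ℕ → A) (M : ℕ) (b : A) (t : ℕ) (c : A) :
    c ∈ posSet win lose M b t ↔ 0 < Qmat win lose M t c b := by
  simp [posSet]

lemma posSet_mono (win lose : ℕ → A) (M : ℕ) (b : A) {s u : ℕ} (hMs : M ≤ s) (hsu : s ≤ u) :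
    posSet win lose M b s ⊆ posSet win lose M b u := by
  intro c hc
  rw [mem_posSet] at hc ⊢
  exact pos_mono win lose M b hMs hsu hc

lemma posSet_growth (win lose : ℕ → A) (M : ℕ) (b : A) {s : ℕ} (hMs : M ≤ s)
    (hw : 0 < Qmat win lose M s (win s) b) (hl : ¬ 0 < Qmat win lose M s (lose s) b) :
    (posSet win lose M b s).card + 1 ≤ (posSet win lose M b (s + 1)).card := by
  have hsub : posSet win lose M b s ⊆ posSet win lose M b (s + 1) :=
    posSet_mono win lose M b hMs (Nat.le_succ s)
  have hmem : lose s ∈ posSet win lose M b (s + 1) := by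
    rw [mem_posSet]
    exact (pos_succ_iff win lose M b hMs _).2 (Or.inr ⟨rfl, hw⟩)
  have hnot : lose s ∉ posSet win lose M b s := by
    rw [mem_posSet]; exact hl
  exact Nat.succ_le_of_lt
    (Finset.card_lt_card ⟨hsub, fun hh => hnot (hh hmem)⟩)

end aux3

/-- Marmi–Moussa–Yoccoz, Lemma 1.2.4: for an interval exchange map on
d ≥ 2 intervals with an infinite Rauzy–Veech expansion and MMY acceleration times
(m_k), if r ≥ max(2d − 3, 2) then all entries of the cocycle matrix
A(k, k+r) = Q(m_k, m_{k+r}) are strictly positive. -/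
theorem mmy_cocycle_positive
    (hd : 2 ≤ Fintype.card A)
    (Ds : ℕ → IETData A) (win lose : ℕ → A)
    (hRV : ∀ n : ℕ, RVStep (Ds n) (Ds (n + 1)) (win n) (lose n))
    (mk : ℕ → ℕ) (hMMY : MMYTimes win mk)
    (r : ℕ) (hr : max (2 * Fintype.card A - 3) 2 ≤ r) (k : ℕ) :
    ∀ a b : A, 0 < Qmat win lose (mk k) (mk (k + r)) a b := by
  obtain ⟨h0, hmk, hseg⟩ := hMMY
  have hmono := hmk.monotone
  have hwl : ∀ n, win n ≠ lose n := by
    intro n h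
    rcases hRV n with ⟨-, -, hlt, -, -⟩ | ⟨-, -, hlt, -, -⟩ <;>
      · rw [h] at hlt; exact lt_irrefl _ hlt
  have hF : ∀ n, win n = win (n + 1) ∨ win n = lose (n + 1) := by
    intro n
    rcases hRV n with ⟨hw, -, -, hcomb, -⟩ | ⟨hw, -, -, hcomb, -⟩
    · have htop : topLetter (Ds (n + 1)).toIETComb = win n := by
        rw [hw]; unfold topLetter; rw [hcomb.1]
      rcases hRV (n + 1) with ⟨hw2, -, -, -, -⟩ | ⟨-, hl2, -, -, -⟩
      · exact Or.inl (by rw [hw2, htop])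
      · exact Or.inr (by rw [hl2, htop])
    · have hbot : botLetter (Ds (n + 1)).toIETComb = win n := by
        rw [hw]; unfold botLetter; rw [hcomb.1]
      rcases hRV (n + 1) with ⟨-, hl2, -, -, -⟩ | ⟨hw2, -, -, -, -⟩
      · exact Or.inr (by rw [hl2, hbot])
      · exact Or.inl (by rw [hw2, hbot])
  have winIcc : ∀ j c, ∃ i, mk j ≤ i ∧ i ≤ mk (j + 1) ∧ win i = c := by
    intro j c
    have hc : c ∈ (Finset.Icc (mk j) (mk (j + 1))).image win :=
      (hseg j).2 ▸ Finset.mem_univ c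
    obtain ⟨i, hi, he⟩ := Finset.mem_image.1 hc
    exact ⟨i, (Finset.mem_Icc.1 hi).1, (Finset.mem_Icc.1 hi).2, he⟩
  have winIco : ∀ j c, c ≠ win (mk (j + 1)) →
      ∃ i, mk j ≤ i ∧ i < mk (j + 1) ∧ win i = c := by
    intro j c hne
    obtain ⟨i, h1, h2, h3⟩ := winIcc j c
    rcases lt_or_eq_of_le h2 with h | h
    · exact ⟨i, h1, h, h3⟩
    · rw [h] at h3; exact absurd h3.symm hne
  intro a b
  by_contra hcon
  have hr2 : 2 ≤ r := le_trans (le_max_right _ _) hr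
  have hrd : 2 * Fintype.card A - 3 ≤ r := le_trans (le_max_left _ _) hr
  have hx : ∀ t, t ≤ mk (k + r) → ¬ 0 < Qmat win lose (mk k) t a b := by
    intro t htN hpos
    rcases le_or_gt (mk k) t with h | h
    · exact hcon (pos_mono win lose (mk k) b h htN hpos)
    · rw [Qmat_of_le win lose h.le, Matrix.one_apply] at hpos
      by_cases hab : a = b
      · subst hab
        exact hcon (pos_b win lose (mk k) a (hmono (Nat.le_add_right k r)))
      · simp [hab] at hpos
  have hP : ∀ i, 2 * i ≤ r →
      i + 2 ≤ (posSet win lose (mk k) b (mk (k + 2 * i + 1) + 1)).card := by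
    intro i
    induction i with
    | zero =>
      intro _
      obtain ⟨u0, hu1, hu2, hu3⟩ := winIcc k b
      obtain ⟨s, hs1, hs2, hsw, hsl⟩ := firstGrowth win lose hwl (mk k) b hu1 hu3
      have h1 : 0 < (posSet win lose (mk k) b s).card :=
        Finset.card_pos.2 ⟨b, (mem_posSet _ _ _ _ _ _).2 (pos_b win lose (mk k) b hs1)⟩
      have h2 := posSet_growth win lose (mk k) b hs1 hsw hsl
      have h3 : posSet win lose (mk k) b (s + 1) ⊆
          posSet win lose (mk k) b (mk (k + 1) + 1) :=
        posSet_mono win lose (mk k) b (hs1.trans (Nat.le_succ s)) (by omega)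
      have h4 := Finset.card_le_card h3
      have he : k + 2 * 0 + 1 = k + 1 := by ring
      rw [he]; omega
    | succ i ih =>
      intro hir
      have ih' := ih (by omega)
      obtain ⟨t, ht1, ht2, ht3⟩ := winIcc (k + 2 * i + 1) a
      obtain ⟨u, hu1, hu2, hu3⟩ := winIcc (k + 2 * i + 2) b
      have e1 : k + 2 * i + 1 + 1 = k + 2 * i + 2 := by ring
      rw [e1] at ht2
      have e2 : k + 2 * i + 2 + 1 = k + 2 * i + 3 := by ring
      rw [e2] at hu2
      have hMt : mk k ≤ t := le_trans (hmono (by omega)) ht1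
      have hnt : ¬ 0 < Qmat win lose (mk k) t (win t) b := by
        rw [ht3]; exact hx t (ht2.trans (hmono (by omega)))
      have hMu : mk k ≤ u := le_trans (hmono (by omega)) hu1
      have hpu : 0 < Qmat win lose (mk k) u (win u) b := by
        rw [hu3]; exact pos_b win lose (mk k) b hMu
      obtain ⟨s, hs1, hs2, hsw, hsl⟩ :=
        claimD win lose hwl hF (mk k) b hMt (ht2.trans hu1) hnt hpu
      have hMs : mk k ≤ s := hMt.trans hs1.le
      have hsub1 : posSet win lose (mk k) b (mk (k + 2 * i + 1) + 1) ⊆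
          posSet win lose (mk k) b s :=
        posSet_mono win lose (mk k) b
          (le_trans (hmono (by omega)) (Nat.le_succ _)) (by omega)
      have hg := posSet_growth win lose (mk k) b hMs hsw hsl
      have hsub2 : posSet win lose (mk k) b (s + 1) ⊆
          posSet win lose (mk k) b (mk (k + 2 * i + 3) + 1) :=
        posSet_mono win lose (mk k) b (hMs.trans (Nat.le_succ s)) (by omega)
      have c1 := Finset.card_le_card hsub1
      have c2 := Finset.card_le_card hsub2
      have e3 : k + 2 * (i + 1) + 1 = k + 2 * i + 3 := by ring
      rw [e3]; omega
  rcases Nat.lt_or_ge (Fintype.card A) 3 with hd3 | hd3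
  · -- d = 2
    have h1 := hP 0 (by omega)
    have he : k + 2 * 0 + 1 = k + 1 := by ring
    rw [he] at h1
    have hcard : (posSet win lose (mk k) b (mk (k + 1) + 1)).card = Fintype.card A := by
      have hle : (posSet win lose (mk k) b (mk (k + 1) + 1)).card ≤ Fintype.card A := by
        simpa using Finset.card_le_univ (posSet win lose (mk k) b (mk (k + 1) + 1))
      omega
    have huniv := Finset.eq_univ_of_card _ hcard
    have ha : a ∈ posSet win lose (mk k) b (mk (k + 1) + 1) := huniv ▸ Finset.mem_univ a
    have hle2 : mk (k + 1) + 1 ≤ mk (k + r) := Nat.succ_le_of_lt (hmk (by omega))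
    exact hx _ hle2 ((mem_posSet _ _ _ _ _ _).1 ha)
  · -- d ≥ 3
    have h1 := hP (Fintype.card A - 3) (by omega)
    have hsub0 : posSet win lose (mk k) b (mk (k + 2 * (Fintype.card A - 3) + 1) + 1) ⊆
        posSet win lose (mk k) b (mk (k + r - 2) + 1) :=
      posSet_mono win lose (mk k) b (le_trans (hmono (by omega)) (Nat.le_succ _))
        (Nat.succ_le_succ (hmono (by omega)))
    have hS := Finset.card_le_card hsub0
    have e2 : k + r - 1 + 1 = k + r := by omega
    have hpos2 : 0 < ((posSet win lose (mk k) b (mk (k + r - 2) + 1)) \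
        {win (mk (k + r))}).card := by
      have h5 := Finset.le_card_sdiff ({win (mk (k + r))})
        (posSet win lose (mk k) b (mk (k + r - 2) + 1))
      rw [Finset.card_singleton] at h5
      omega
    obtain ⟨c, hc⟩ := Finset.card_pos.1 hpos2
    rw [Finset.mem_sdiff, Finset.mem_singleton] at hc
    obtain ⟨hcS, hcW⟩ := hc
    obtain ⟨u', hu1, hu2, hu3⟩ := winIco (k + r - 1) c (by rw [e2]; exact hcW)
    rw [e2] at hu2
    obtain ⟨t', htt1, htt2, htt3⟩ := winIcc (k + r - 2) a
    have e1 : k + r - 2 + 1 = k + r - 1 := by omega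
    rw [e1] at htt2
    have hMt' : mk k ≤ t' := le_trans (hmono (by omega)) htt1
    have hnt : ¬ 0 < Qmat win lose (mk k) t' (win t') b := by
      rw [htt3]; exact hx t' (htt2.trans (hmono (by omega)))
    have hstep : mk (k + r - 2) + 1 ≤ mk (k + r - 1) :=
      Nat.succ_le_of_lt (hmk (by omega))
    have hpu : 0 < Qmat win lose (mk k) u' (win u') b := by
      rw [hu3]
      exact (mem_posSet _ _ _ _ _ _).1
        (posSet_mono win lose (mk k) b (le_trans (hmono (by omega)) (Nat.le_succ _))
          (hstep.trans hu1) hcS)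
    obtain ⟨s, hs1, hs2, hsw, hsl⟩ :=
      claimD win lose hwl hF (mk k) b hMt' (htt2.trans hu1) hnt hpu
    have hMs : mk k ≤ s := hMt'.trans hs1.le
    have hsub1 : posSet win lose (mk k) b (mk (k + r - 2) + 1) ⊆
        posSet win lose (mk k) b s :=
      posSet_mono win lose (mk k) b
        (le_trans (hmono (by omega)) (Nat.le_succ _)) (by omega)
    have hg := posSet_growth win lose (mk k) b hMs hsw hsl
    have c1 := Finset.card_le_card hsub1
    have hcard : (posSet win lose (mk k) b (s + 1)).card = Fintype.card A := by
      have hle : (posSet win lose (mk k) b (s + 1)).card ≤ Fintype.card A := by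
        simpa using Finset.card_le_univ (posSet win lose (mk k) b (s + 1))
      omega
    have huniv := Finset.eq_univ_of_card _ hcard
    have ha : a ∈ posSet win lose (mk k) b (s + 1) := huniv ▸ Finset.mem_univ a
    exact hx (s + 1) (by omega) ((mem_posSet _ _ _ _ _ _).1 ha)
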